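/- The set of attractors of a homeomorphism f of a compact metric space is countable. -/

import Mathlib

open Set Filter Topology

variable {X : Type*} [MetricSpace X]

/-- An ε-chain from `x` to `y` for `f`: a sequence `x = c 0, ..., c n = y` with `n ≥ 1`
and `dist (f (c i)) (c (i+1)) < ε` for all `i < n`. -/
def EpsChain (f : X → X) (ε : ℝ) (x y : X) : Prop :=
  ∃ n : ℕ, 1 ≤ n ∧ ∃ c : ℕ → X, c 0 = x ∧ c n = y ∧ ∀ i < n, dist (f (c i)) (c (i + 1)) < ε

/-- The chain recurrent set of `f`. -/
def ChainRecurrentSet (f : X → X) : Set X := {x | ∀ ε > 0, EpsChain f ε x x}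

/-- `U` is an (open) isolating neighborhood for `A`. -/
def IsIsolatingNbhd (f : X → X) (A U : Set X) : Prop :=
  IsOpen U ∧ A ⊆ U ∧ f '' closure U ⊆ U ∧ (⋂ n : ℕ, f^[n] '' closure U) = A

/-- `A` is an attractor for `f`. -/
def IsAttractor (f : X → X) (A : Set X) : Prop :=
  IsCompact A ∧ ∃ U, IsIsolatingNbhd f A U

/-- `(A, Astar)` is an attractor–repeller pair for the homeomorphism `f`. -/
def IsDualPair (f : X ≃ₜ X) (A Astar : Set X) : Prop :=
  IsCompact A ∧ ∃ U, IsIsolatingNbhd (⇑f) A U ∧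
    Astar = ⋂ n : ℕ, (⇑f)^[n] ⁻¹' closure ((closure U)ᶜ)

theorem attractors_countable' [CompactSpace X] (f : X ≃ₜ X) :
    {A : Set X | IsCompact A ∧ ∃ U, IsOpen U ∧ A ⊆ U ∧ (⇑f) '' closure U ⊆ U ∧
      (⋂ n : ℕ, (⇑f)^[n] '' closure U) = A}.Countable := by
  obtain ⟨b, hbc, -, hb⟩ := TopologicalSpace.exists_countable_basis X
  refine Set.Countable.mono ?_
    ((countable_setOf_finite_subset hbc).image fun s => ⋂ n : ℕ, (⇑f)^[n] '' closure (⋃₀ s))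
  rintro A ⟨hAc, U, hUo, hAU, hfU, hUA⟩
  have hclU : IsCompact (closure U) := isClosed_closure.isCompact
  have hK : IsCompact ((⇑f) '' closure U) := hclU.image f.continuous
  have key : ∀ x ∈ (⇑f) '' closure U, ∃ t ∈ b, x ∈ t ∧ closure t ⊆ U := by
    intro x hx
    obtain ⟨C, ⟨hCn, hCcl⟩, hCU⟩ := (closed_nhds_basis x).mem_iff.mp (hUo.mem_nhds (hfU hx))
    obtain ⟨t, htb, hxt, htC⟩ := hb.mem_nhds_iff.mp hCn
    exact ⟨t, htb, hxt, (closure_minimal htC hCcl).trans hCU⟩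
  choose! t htb hxt htU using key
  obtain ⟨F, hF⟩ := hK.elim_finite_subcover (fun x : (⇑f) '' closure U => t x)
    (fun x => hb.isOpen (htb x x.2)) (fun y hy => mem_iUnion.mpr ⟨⟨y, hy⟩, hxt y hy⟩)
  set s : Set (Set X) := (fun x : ↥((⇑f) '' closure U) => t ↑x) '' ↑F with hs
  have hsfin : s.Finite := F.finite_toSet.image _
  have hsb : s ⊆ b := by
    intro u hu
    obtain ⟨x, -, rfl⟩ := hu
    exact htb x x.2
  refine ⟨s, ⟨hsfin, hsb⟩, ?_⟩
  have hVU : (⇑f) '' closure U ⊆ ⋃₀ s := by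
    intro y hy
    obtain ⟨x, hxF, hytx⟩ := mem_iUnion₂.mp (hF hy)
    exact ⟨t x, ⟨x, hxF, rfl⟩, hytx⟩
  have hclV : closure (⋃₀ s) ⊆ closure U := by
    rw [hsfin.closure_sUnion]
    refine iUnion₂_subset fun u hu => ?_
    obtain ⟨x, -, rfl⟩ := hu
    exact (htU x x.2).trans subset_closure
  refine subset_antisymm ?_ ?_
  · calc (⋂ n : ℕ, (⇑f)^[n] '' closure (⋃₀ s)) ⊆ ⋂ n : ℕ, (⇑f)^[n] '' closure U :=
        iInter_mono fun n => image_mono hclV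
    _ = A := hUA
  · intro a ha
    refine mem_iInter.mpr fun n => ?_
    have haU : a ∈ (⇑f)^[n + 1] '' closure U := by
      rw [← hUA] at ha; exact mem_iInter.mp ha (n + 1)
    rw [Function.iterate_succ, image_comp] at haU
    exact image_mono ((hVU.trans subset_closure).trans subset_rfl) haU

theorem attractors_countable [CompactSpace X] (f : X ≃ₜ X) :
    {A : Set X | IsAttractor (⇑f) A}.Countable := by
  have h := attractors_countable' f
  refine h.mono fun A hA => ?_
  obtain ⟨hAc, U, hUo, hAU, hfU, hUA⟩ := hA
  exact ⟨hAc, U, hUo, hAU, hfU, hUA⟩
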